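/- Fix q ∈ (0,1) and t ∈ [0,1]. For z ∈ ℂ with Re z > 1, the series ψ(z) := 2·Σ_{n=1}^∞ n^{−z} · Σ_{k=0}^{2n−1} ( t²·q^{4k} + (1−t)·((1+q^{−2})·q^{2k} − (q²+q^{−2})·q^{4k}) ) converges absolutely, and there exists an entire function g : ℂ → ℂ such that ψ(z) = 2·(1+(1−t)²)·(1−q⁴)^{−1}·ζ(z) + g(z) for all z with Re z > 1, where ζ is the Riemann zeta function. In particular, ψ extends to a meromorphic function on ℂ whose only singularity is a simple pole at z = 1 with residue 2·(1+(1−t)²)/(1−q⁴), which is nonzero for every t ∈ [0,1]. -/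

import Mathlib

noncomputable section

namespace Podles

open Complex Filter

/-- Auxiliary function `Σ_{n≥1} n^{-z} r^n`, entire in `z` for `0 ≤ r < 1`. -/
def auxF (r : ℝ) (z : ℂ) : ℂ := ∑' n : ℕ, ((n : ℂ) + 1) ^ (-z) * (r : ℂ) ^ (n + 1)

lemma aux_norm (r : ℝ) (hr0 : 0 ≤ r) (R : ℝ) (n : ℕ) (z : ℂ) (hz : -R ≤ z.re) :
    ‖((n : ℂ) + 1) ^ (-z) * (r : ℂ) ^ (n + 1)‖ ≤ ((n : ℝ) + 1) ^ ⌈R⌉₊ * r ^ (n + 1) := by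
  have h1 : (0:ℝ) < (n:ℝ) + 1 := by positivity
  have hb : ((n:ℂ) + 1) = (((n:ℝ) + 1 : ℝ) : ℂ) := by push_cast; ring
  rw [norm_mul]
  have e1 : ‖((n : ℂ) + 1) ^ (-z)‖ = ((n:ℝ)+1) ^ (-z).re := by
    rw [hb, Complex.norm_cpow_eq_rpow_re_of_pos h1]
  have e2 : ‖((r:ℂ)) ^ (n+1)‖ = r ^ (n+1) := by
    rw [norm_pow, Complex.norm_real, Real.norm_of_nonneg hr0]
  rw [e1, e2]
  have h3 : ((n:ℝ)+1) ^ (-z).re ≤ ((n:ℝ)+1) ^ ((⌈R⌉₊:ℕ):ℝ) := by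
    apply Real.rpow_le_rpow_of_exponent_le (by linarith)
    simp only [Complex.neg_re]
    have := Nat.le_ceil R
    linarith
  rw [Real.rpow_natCast] at h3
  exact mul_le_mul_of_nonneg_right h3 (pow_nonneg hr0 _)

lemma aux_summable_bound (r : ℝ) (hr0 : 0 ≤ r) (hr1 : r < 1) (k : ℕ) :
    Summable (fun n : ℕ => ((n:ℝ)+1) ^ k * r ^ (n+1)) := by
  have h := summable_pow_mul_geometric_of_norm_lt_one (R := ℝ) k
    (by rwa [Real.norm_of_nonneg hr0])
  have h2 := (summable_nat_add_iff 1).2 h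
  exact h2.congr fun n => by push_cast; ring

lemma aux_summable (r : ℝ) (hr0 : 0 ≤ r) (hr1 : r < 1) (z : ℂ) :
    Summable (fun n : ℕ => ((n : ℂ) + 1) ^ (-z) * (r : ℂ) ^ (n + 1)) := by
  apply Summable.of_norm
  exact Summable.of_nonneg_of_le (fun n => norm_nonneg _)
    (fun n => aux_norm r hr0 (|z.re|) n z (neg_abs_le _))
    (aux_summable_bound r hr0 hr1 _)

lemma aux_diff (r : ℝ) (hr0 : 0 ≤ r) (hr1 : r < 1) : Differentiable ℂ (auxF r) := by
  intro z
  set R : ℝ := |z.re| + 1 with hR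
  have hU : IsOpen {w : ℂ | -R < w.re} := isOpen_lt continuous_const Complex.continuous_re
  have hmem : z ∈ {w : ℂ | -R < w.re} := by
    simp only [Set.mem_setOf_eq, hR]
    have := neg_abs_le z.re
    linarith
  have hdo := differentiableOn_tsum_of_summable_norm (aux_summable_bound r hr0 hr1 ⌈R⌉₊)
    (fun n => (((differentiable_neg).const_cpow
      (Or.inl (by exact_mod_cast Nat.succ_ne_zero n))).mul_const _).differentiableOn)
    hU (fun n w hw => aux_norm r hr0 R n w (le_of_lt hw))
  exact (hdo.differentiableAt (hU.mem_nhds hmem))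

lemma podles_inner_sum (q t : ℝ) (hq0 : 0 < q) (hq1 : q < 1) (m : ℕ) :
    ∑ k ∈ Finset.range (2 * m),
      (t ^ 2 * q ^ (4 * k) + (1 - t) * ((1 + (q ^ 2)⁻¹) * q ^ (2 * k) -
        (q ^ 2 + (q ^ 2)⁻¹) * q ^ (4 * k)))
    = (1 + (1 - t) ^ 2) / (1 - q ^ 4)
      + (-(1 - t) * (1 + (q ^ 2)⁻¹) / (1 - q ^ 2)) * (q ^ 4) ^ m
      + ((1 - t) * (q ^ 2 + (q ^ 2)⁻¹) / (1 - q ^ 4) - t ^ 2 / (1 - q ^ 4)) * (q ^ 8) ^ m := by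
  have hq2 : (q:ℝ) ^ 2 < 1 := by nlinarith
  have hq4 : (q:ℝ) ^ 4 < 1 := by nlinarith
  have hq2' : (q:ℝ) ^ 2 ≠ 1 := ne_of_lt hq2
  have hq4' : (q:ℝ) ^ 4 ≠ 1 := ne_of_lt hq4
  have hqne : q ≠ 0 := ne_of_gt hq0
  have key : ∀ k : ℕ, (t ^ 2 * q ^ (4 * k) + (1 - t) * ((1 + (q ^ 2)⁻¹) * q ^ (2 * k) -
        (q ^ 2 + (q ^ 2)⁻¹) * q ^ (4 * k)))
      = t ^ 2 * (q ^ 4) ^ k + ((1 - t) * (1 + (q ^ 2)⁻¹)) * (q ^ 2) ^ k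
        - ((1 - t) * (q ^ 2 + (q ^ 2)⁻¹)) * (q ^ 4) ^ k := by
    intro k
    rw [pow_mul, pow_mul]
    ring
  rw [Finset.sum_congr rfl (fun k _ => key k), Finset.sum_sub_distrib,
    Finset.sum_add_distrib, ← Finset.mul_sum, ← Finset.mul_sum, ← Finset.mul_sum,
    geom_sum_eq hq2', geom_sum_eq hq4']
  have e1 : ((q:ℝ) ^ 4) ^ (2 * m) = (q ^ 8) ^ m := by
    rw [← pow_mul, ← pow_mul]; ring_nf
  have e2 : ((q:ℝ) ^ 2) ^ (2 * m) = (q ^ 4) ^ m := by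
    rw [← pow_mul, ← pow_mul]; ring_nf
  rw [e1, e2]
  have h2 : (1:ℝ) - q ^ 2 ≠ 0 := by intro h; apply hq2'; linarith
  have h4 : (1:ℝ) - q ^ 4 ≠ 0 := by intro h; apply hq4'; linarith
  have h2' : (q:ℝ) ^ 2 - 1 ≠ 0 := by intro h; apply hq2'; linarith
  have h4' : (q:ℝ) ^ 4 - 1 ≠ 0 := by intro h; apply hq4'; linarith
  generalize ((q:ℝ) ^ 4) ^ m = X
  generalize ((q:ℝ) ^ 8) ^ m = Y
  field_simp
  ring

lemma zeta_summ (z : ℂ) (hz : 1 < z.re) :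
    Summable (fun n : ℕ => ((n:ℂ)+1) ^ (-z)) := by
  have h := Complex.summable_one_div_nat_cpow.mpr hz
  have h2 := (summable_nat_add_iff 1).2 h
  refine h2.congr fun n => ?_
  push_cast
  rw [cpow_neg, one_div]

/-- the zeta-type function `ψ(z) = 2 Σ_{n≥1} n^{−z} Σ_{k=0}^{2n−1} (t²q^{4k} +
(1−t)((1+q^{−2})q^{2k} − (q²+q^{−2})q^{4k}))` converges absolutely for `Re z > 1`, equals
`2(1+(1−t)²)(1−q⁴)⁻¹ ζ(z)` plus an entire function there, and hence extends meromorphically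
to `ℂ` with a single simple pole at `z = 1` with nonzero residue `2(1+(1−t)²)/(1−q⁴)`. -/
theorem statement19 (q t : ℝ) (hq0 : 0 < q) (hq1 : q < 1) (ht0 : 0 ≤ t) (ht1 : t ≤ 1) :
    (∀ z : ℂ, 1 < z.re →
      Summable (fun n : ℕ =>
        ‖(2 : ℂ) * ((n : ℂ) + 1) ^ (-z) *
            ((∑ k ∈ Finset.range (2 * (n + 1)),
                (t ^ 2 * q ^ (4 * k) +
                  (1 - t) * ((1 + (q ^ 2)⁻¹) * q ^ (2 * k) -
                    (q ^ 2 + (q ^ 2)⁻¹) * q ^ (4 * k))) : ℝ) : ℂ)‖)) ∧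
    ∃ g : ℂ → ℂ, Differentiable ℂ g ∧
      (∀ z : ℂ, 1 < z.re →
        (2 : ℂ) * ∑' n : ℕ, ((n : ℂ) + 1) ^ (-z) *
            ((∑ k ∈ Finset.range (2 * (n + 1)),
                (t ^ 2 * q ^ (4 * k) +
                  (1 - t) * ((1 + (q ^ 2)⁻¹) * q ^ (2 * k) -
                    (q ^ 2 + (q ^ 2)⁻¹) * q ^ (4 * k))) : ℝ) : ℂ) =
          ((2 * (1 + (1 - t) ^ 2) / (1 - q ^ 4) : ℝ) : ℂ) * riemannZeta z + g z) ∧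
      (∀ z : ℂ, z ≠ 1 → DifferentiableAt ℂ
        (fun w => ((2 * (1 + (1 - t) ^ 2) / (1 - q ^ 4) : ℝ) : ℂ) * riemannZeta w + g w) z) ∧
      Filter.Tendsto
        (fun z : ℂ => (z - 1) *
          (((2 * (1 + (1 - t) ^ 2) / (1 - q ^ 4) : ℝ) : ℂ) * riemannZeta z + g z))
        (nhdsWithin 1 {(1 : ℂ)}ᶜ)
        (nhds ((2 * (1 + (1 - t) ^ 2) / (1 - q ^ 4) : ℝ) : ℂ)) ∧
      (2 * (1 + (1 - t) ^ 2) / (1 - q ^ 4) : ℝ) ≠ 0 := by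
  have hq4lt : (q:ℝ) ^ 4 < 1 := pow_lt_one₀ hq0.le hq1 (by norm_num)
  have hq8lt : (q:ℝ) ^ 8 < 1 := pow_lt_one₀ hq0.le hq1 (by norm_num)
  have hq4nn : (0:ℝ) ≤ q ^ 4 := by positivity
  have hq8nn : (0:ℝ) ≤ q ^ 8 := by positivity
  set c : ℝ := (1 + (1 - t) ^ 2) / (1 - q ^ 4) with hc
  set A : ℝ := -(1 - t) * (1 + (q ^ 2)⁻¹) / (1 - q ^ 2) with hA
  set B : ℝ := (1 - t) * (q ^ 2 + (q ^ 2)⁻¹) / (1 - q ^ 4) - t ^ 2 / (1 - q ^ 4) with hB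
  have hS : ∀ n : ℕ, (∑ k ∈ Finset.range (2 * (n + 1)),
      (t ^ 2 * q ^ (4 * k) + (1 - t) * ((1 + (q ^ 2)⁻¹) * q ^ (2 * k) -
        (q ^ 2 + (q ^ 2)⁻¹) * q ^ (4 * k))))
      = c + A * (q ^ 4) ^ (n + 1) + B * (q ^ 8) ^ (n + 1) :=
    fun n => podles_inner_sum q t hq0 hq1 (n + 1)
  have hSbound : ∀ n : ℕ, |(∑ k ∈ Finset.range (2 * (n + 1)),
      (t ^ 2 * q ^ (4 * k) + (1 - t) * ((1 + (q ^ 2)⁻¹) * q ^ (2 * k) -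
        (q ^ 2 + (q ^ 2)⁻¹) * q ^ (4 * k))))| ≤ |c| + |A| + |B| := by
    intro n
    rw [hS n]
    have p4 : ((q:ℝ) ^ 4) ^ (n + 1) ≤ 1 := pow_le_one₀ hq4nn (le_of_lt hq4lt)
    have p8 : ((q:ℝ) ^ 8) ^ (n + 1) ≤ 1 := pow_le_one₀ hq8nn (le_of_lt hq8lt)
    have p4' : (0:ℝ) ≤ ((q:ℝ) ^ 4) ^ (n + 1) := by positivity
    have p8' : (0:ℝ) ≤ ((q:ℝ) ^ 8) ^ (n + 1) := by positivity
    calc |c + A * (q ^ 4) ^ (n + 1) + B * (q ^ 8) ^ (n + 1)|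
        ≤ |c| + |A * (q ^ 4) ^ (n + 1)| + |B * (q ^ 8) ^ (n + 1)| := by
          exact (abs_add_le _ _).trans (by gcongr; exact abs_add_le _ _)
      _ ≤ |c| + |A| + |B| := by
          rw [abs_mul, abs_mul]
          gcongr
          · rw [_root_.abs_of_nonneg p4']
            exact mul_le_of_le_one_right (abs_nonneg _) p4
          · rw [_root_.abs_of_nonneg p8']
            exact mul_le_of_le_one_right (abs_nonneg _) p8
  -- norm of the cpow factor
  have hnorm : ∀ (z : ℂ) (n : ℕ), ‖((n : ℂ) + 1) ^ (-z)‖ = ((n:ℝ)+1) ^ (-z.re) := by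
    intro z n
    have h1 : (0:ℝ) < (n:ℝ) + 1 := by positivity
    have hb : ((n:ℂ) + 1) = (((n:ℝ) + 1 : ℝ) : ℂ) := by push_cast; ring
    rw [hb, Complex.norm_cpow_eq_rpow_re_of_pos h1, Complex.neg_re]
  have hrsum : ∀ z : ℂ, 1 < z.re → Summable (fun n : ℕ => ((n:ℝ)+1) ^ (-z.re)) := by
    intro z hz
    have h := Real.summable_nat_rpow.mpr (show -z.re < -1 by linarith)
    have h2 := (summable_nat_add_iff 1).2 h
    exact h2.congr fun n => by push_cast; ring_nf
  constructor
  · -- summability of norms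
    intro z hz
    set M : ℝ := |c| + |A| + |B| with hM
    refine Summable.of_nonneg_of_le (fun n => norm_nonneg _) (fun n => ?_)
      (((hrsum z hz).mul_left (2 * M)))
    rw [norm_mul, norm_mul, hnorm z n, Complex.norm_ofNat, Complex.norm_real]
    calc 2 * ((n:ℝ)+1) ^ (-z.re) * ‖(∑ k ∈ Finset.range (2 * (n + 1)),
          (t ^ 2 * q ^ (4 * k) + (1 - t) * ((1 + (q ^ 2)⁻¹) * q ^ (2 * k) -
            (q ^ 2 + (q ^ 2)⁻¹) * q ^ (4 * k))))‖
        ≤ 2 * ((n:ℝ)+1) ^ (-z.re) * M := by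
          refine mul_le_mul_of_nonneg_left ?_ (by positivity)
          rw [Real.norm_eq_abs]
          exact hSbound n
      _ = 2 * M * ((n:ℝ)+1) ^ (-z.re) := by ring
  · refine ⟨fun z => 2 * (A:ℂ) * auxF (q ^ 4) z + 2 * (B:ℂ) * auxF (q ^ 8) z,
      ((((aux_diff _ hq4nn hq4lt).const_mul _).add
        ((aux_diff _ hq8nn hq8lt).const_mul _)) : Differentiable ℂ _), ?_, ?_, ?_, ?_⟩
    · intro z hz
      have hsum0 := zeta_summ z hz
      have hsum4 := aux_summable (q ^ 4) hq4nn hq4lt z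
      have hsum8 := aux_summable (q ^ 8) hq8nn hq8lt z
      have h1 : (∑' n : ℕ, ((n : ℂ) + 1) ^ (-z) *
            ((∑ k ∈ Finset.range (2 * (n + 1)),
                (t ^ 2 * q ^ (4 * k) +
                  (1 - t) * ((1 + (q ^ 2)⁻¹) * q ^ (2 * k) -
                    (q ^ 2 + (q ^ 2)⁻¹) * q ^ (4 * k))) : ℝ) : ℂ))
          = ∑' n : ℕ, ((c:ℂ) * ((n : ℂ) + 1) ^ (-z)
            + (A:ℂ) * (((n : ℂ) + 1) ^ (-z) * (((q ^ 4 : ℝ)):ℂ) ^ (n + 1))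
            + (B:ℂ) * (((n : ℂ) + 1) ^ (-z) * (((q ^ 8 : ℝ)):ℂ) ^ (n + 1))) := by
        refine tsum_congr fun n => ?_
        rw [hS n]
        push_cast
        ring
      have hzeta : riemannZeta z = ∑' n : ℕ, ((n:ℂ)+1) ^ (-z) := by
        rw [zeta_eq_tsum_one_div_nat_add_one_cpow hz]
        exact tsum_congr fun n => by rw [cpow_neg, one_div]
      rw [h1, Summable.tsum_add ((hsum0.mul_left _).add (hsum4.mul_left _)) (hsum8.mul_left _),
        Summable.tsum_add (hsum0.mul_left _) (hsum4.mul_left _), tsum_mul_left, tsum_mul_left,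
        tsum_mul_left, ← hzeta]
      show (2:ℂ) * ((c:ℂ) * riemannZeta z + (A:ℂ) * auxF (q ^ 4) z + (B:ℂ) * auxF (q ^ 8) z) = _
      have hKc : ((2 * (1 + (1 - t) ^ 2) / (1 - q ^ 4) : ℝ) : ℂ) = 2 * (c:ℂ) := by
        rw [hc]; push_cast; ring
      rw [hKc]
      ring
    · intro z hz
      exact ((differentiableAt_riemannZeta hz).const_mul _).add
        (((((aux_diff _ hq4nn hq4lt).const_mul _).add
          ((aux_diff _ hq8nn hq8lt).const_mul _)) z))
    · have hgc : Continuous fun z => 2 * (A:ℂ) * auxF (q ^ 4) z + 2 * (B:ℂ) * auxF (q ^ 8) z :=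
        (((aux_diff _ hq4nn hq4lt).const_mul _).add
          ((aux_diff _ hq8nn hq8lt).const_mul _)).continuous
      set K : ℂ := ((2 * (1 + (1 - t) ^ 2) / (1 - q ^ 4) : ℝ) : ℂ) with hK
      set g : ℂ → ℂ := fun z => 2 * (A:ℂ) * auxF (q ^ 4) z + 2 * (B:ℂ) * auxF (q ^ 8) z with hg
      have h2 : Tendsto (fun z : ℂ => (z - 1) * g z) (nhdsWithin 1 {(1:ℂ)}ᶜ) (nhds 0) := by
        have ht : Tendsto (fun z : ℂ => (z - 1) * g z) (nhds 1) (nhds ((1 - 1) * g 1)) :=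
          ((continuous_id.sub continuous_const).mul hgc).tendsto 1
        simpa using ht.mono_left nhdsWithin_le_nhds
      have h3 := (riemannZeta_residue_one.const_mul K).add h2
      simp only [mul_one, add_zero] at h3
      refine h3.congr fun z => by ring
    · have h4 : (0:ℝ) < 1 - q ^ 4 := by linarith
      have hnum : (0:ℝ) < 2 * (1 + (1 - t) ^ 2) := by nlinarith [sq_nonneg (1 - t)]
      exact ne_of_gt (div_pos hnum h4)

end Podles
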